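/- Let A be a symmetric implication zroupoid such that A satisfies 0 → x = x for all x. Then A satisfies the identity x → (x → x) = (x → x) → x for all x in A. -/

import Mathlib

/-- A symmetric I-zroupoid satisfying 0 → x = x satisfies
x → (x → x) = (x → x) → x. -/
theorem stmt_3 {A : Type*} (f : A → A → A) (z : A)
    (hI : ∀ x y w : A, f (f x y) w = f (f (f (f w z) x) (f (f y w) z)) z)
    (hI0 : f (f z z) z = z)
    (hinv : ∀ x : A, f (f x z) z = x)
    (hsym : ∀ x y : A, f (f x (f y z)) z = f (f y (f x z)) z)
    (hyp : ∀ x : A, f z x = x) :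
    ∀ x : A, f x (f x x) = f (f x x) x := by
  have inj : ∀ p q : A, f p z = f q z → p = q := by
    intro p q h
    rw [← hinv p, h, hinv]
  -- E : w → (y→w)' = (y→w)'
  have E : ∀ y w : A, f w (f (f y w) z) = f (f y w) z := by
    intro y w
    have h := hI z y w
    rw [hyp, hinv] at h
    have h2 := congrArg (fun t => f t z) h
    rw [hinv] at h2
    exact h2.symm
  -- B : w → w' = w'
  have B : ∀ w : A, f w (f w z) = f w z := by
    intro w
    have h := E z w
    rwa [hyp] at h
  -- C : u' → u = u
  have C : ∀ u : A, f (f u z) u = u := by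
    intro u
    have h := B (f u z)
    rwa [hinv] at h
  -- S : p → q = q' → p'
  have S : ∀ p q : A, f p q = f (f q z) (f p z) := by
    intro p q
    apply inj
    have h := hsym p (f q z)
    rwa [hinv] at h
  -- T : x' → w = ((w' → x) → w')'
  have T : ∀ x w : A, f (f x z) w = f (f (f (f w z) x) (f w z)) z := by
    intro x w
    have h := hI x z w
    rwa [hyp] at h
  -- K : (x→x) → x' = ((x→x)→x)'
  have K : ∀ x : A, f (f x x) (f x z) = f (f (f x x) x) z := by
    intro x
    have h := hI x x (f x z)
    rwa [hinv, B, hinv] at h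
  -- G0 : x→(x→x) = ((x→(x→x))→x)'
  have G0 : ∀ x : A, f x (f x x) = f (f (f x (f x x)) x) z := by
    intro x
    have h := T (f x x) (f x z)
    rw [hinv] at h
    exact (S x (f x x)).trans h
  -- R : (x→(x→x))→x = (x→x)→x
  have R : ∀ x : A, f (f x (f x x)) x = f (f x x) x := by
    intro x
    have h := hI x (f x x) x
    rwa [C, E, hinv] at h
  -- G1 : x→(x→x) = ((x→x)→x)'
  have G1 : ∀ x : A, f x (f x x) = f (f (f x x) x) z := by
    intro x
    rw [G0, R]
  intro x
  set a := f x x with ha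
  set s := f a x with hs
  have G1x : f x a = f s z := G1 x
  have Kx : f a (f x z) = f s z := K x
  -- D : x' → x' = x→x
  have D : f (f x z) (f x z) = a := (S x x).symm
  -- us : x' → a = s
  have us : f (f x z) a = s := by
    have h := G1 (f x z)
    rw [D] at h
    rw [h, Kx, hinv]
  -- a'x : a' → x = s
  have a'x : f (f a z) x = s := by
    have h := S (f a z) x
    rw [hinv] at h
    rw [h]; exact us
  -- W : a → s = s
  have W : f a s = s := by
    have h := E x a
    rwa [G1x, hinv] at h
  -- xs : x → s = s'
  have xs : f x s = f s z := by
    have h1 := S x s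
    rw [← G1x] at h1
    have h2 := hI x a (f x z)
    rw [hinv, ← ha, Kx, hinv, W] at h2
    rw [h2] at h1
    exact h1
  -- tx : s' → x = s
  have tx : f (f s z) x = s := by
    rw [← G1x]
    exact R x
  -- sfact : (s→s)' = s
  have sfact : f (f s s) z = s := by
    have h := hI x x s
    rw [← ha, W, tx, xs, hinv] at h
    exact h.symm
  -- b : a→a = s
  have b : f a a = s := by
    have h := hI x x a
    rw [← ha, a'x, G1x, hinv, sfact] at h
    exact h
  -- r : (x→a)→a = s
  have r : f (f x a) a = s := by
    have h := hI x a a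
    rwa [a'x, b, B, hinv] at h
  -- fin1 : s→s = s
  have fin1 : f s s = s := by
    have tsa : f (f s z) a = s := by rw [← G1x]; exact r
    have h := hI a x s
    rw [tsa, xs, hinv, sfact] at h
    rw [← hs] at h
    exact h
  -- fin2 : s' = s
  have fin2 : f s z = s := by
    have h : f s s = f s z := by
      have h0 := (hinv (f s s)).symm
      rw [sfact] at h0
      exact h0
    rw [← h, fin1]
  rw [G1x, fin2, hs]
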